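/- Suppose −1 < ρ < 0. Then the infimum of g₃(t,s) over the region Ā = {(t,s) : 0 < s ≤ t} equals 4(μ₂+(1−2ρ)μ₁), and ((1−2ρ)/μ₁, 1/(μ₂−2ρμ₁)) is the unique minimizer of g₃ on Ā. -/

import Mathlib

open Matrix

/-- The covariance matrix of `(X₁(t), X₂(s))`. -/
noncomputable def covM (ρ t s : ℝ) : Matrix (Fin 2) (Fin 2) ℝ :=
  !![t, ρ * min t s; ρ * min t s, s]

/-- The quadratic form `(x,y) Σ_{ts}⁻¹ (x,y)ᵀ`. -/
noncomputable def quadF (ρ t s x y : ℝ) : ℝ :=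
  dotProduct ![x, y] ((covM ρ t s)⁻¹.mulVec ![x, y])

/-- `g(t,s) = inf{ (x,y) Σ_{ts}⁻¹ (x,y)ᵀ : x ≥ 1+μ₁t, y ≥ 1+μ₂s }`. -/
noncomputable def gFun (μ₁ μ₂ ρ t s : ℝ) : ℝ :=
  sInf { q : ℝ | ∃ x y : ℝ, 1 + μ₁ * t ≤ x ∧ 1 + μ₂ * s ≤ y ∧ q = quadF ρ t s x y }

/-- `g₃(t,s)`: the quadratic form at the corner point `(1+μ₁t, 1+μ₂s)`. -/
noncomputable def g3Fun (μ₁ μ₂ ρ t s : ℝ) : ℝ :=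
  quadF ρ t s (1 + μ₁ * t) (1 + μ₂ * s)

/-- auxiliary quadratic (in `s`) coefficient of `t`. -/
def Baux (μ₁ μ₂ ρ s : ℝ) : ℝ :=
  1 + (6*ρ*μ₁ - 2*μ₁ - 2*μ₂)*s + μ₂*(μ₂ - 2*ρ*μ₁)*s^2

/-- auxiliary discriminant-factor quadratic in `s`. -/
def Qaux (μ₁ μ₂ ρ s : ℝ) : ℝ :=
  -(μ₂^2*(μ₂ - 2*ρ*μ₁)^2)*s^2
    + (2*μ₂^3 + 4*μ₁*μ₂^2 - 16*ρ*μ₁*μ₂^2 - 16*ρ*μ₁^2*μ₂ + 40*ρ^2*μ₁^2*μ₂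
        + 16*ρ^2*μ₁^3 - 32*ρ^3*μ₁^3)*s
    - (μ₂ - 2*ρ*μ₁)^2

/-- the normalized objective: `g₃ − 4(μ₂+(1−2ρ)μ₁)` times the determinant. -/
def Faux (μ₁ μ₂ ρ t s : ℝ) : ℝ :=
  μ₁^2*s*t^2 + (Baux μ₁ μ₂ ρ s)*t + (1 - 2*ρ)*s*(1 - 2*ρ*(μ₂ - 2*ρ*μ₁)*s)

lemma covM_inv (ρ t s : ℝ) (hρ : ρ^2 < 1) (hs : 0 < s) (hst : s ≤ t) :
    (covM ρ t s)⁻¹ = (s*(t - ρ^2*s))⁻¹ • !![s, -(ρ*s); -(ρ*s), t] := by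
  have ht : 0 < t := lt_of_lt_of_le hs hst
  have h2 : 0 < t - ρ^2*s := by nlinarith
  have h1 : s ≠ 0 := hs.ne'
  have h2' : t - ρ^2*s ≠ 0 := h2.ne'
  apply Matrix.inv_eq_right_inv
  rw [covM, min_eq_right hst, Matrix.mul_smul, Matrix.mul_fin_two]
  ext i j
  fin_cases i <;> fin_cases j <;>
    simp [Matrix.smul_apply, Matrix.one_apply] <;>
    first
      | (right; ring)
      | (field_simp; ring)

lemma quadF_eq (ρ t s x y : ℝ) (hρ : ρ^2 < 1) (hs : 0 < s) (hst : s ≤ t) :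
    quadF ρ t s x y = (s*x^2 - 2*ρ*s*x*y + t*y^2) / (s*(t - ρ^2*s)) := by
  have ht : 0 < t := lt_of_lt_of_le hs hst
  have h2 : 0 < t - ρ^2*s := by nlinarith
  have h1 : s ≠ 0 := hs.ne'
  have h2' : t - ρ^2*s ≠ 0 := h2.ne'
  rw [quadF, covM_inv ρ t s hρ hs hst]
  simp [Matrix.mulVec, dotProduct, Fin.sum_univ_two]
  field_simp
  ring

lemma g3_eq (μ₁ μ₂ ρ t s : ℝ) (hρ : ρ^2 < 1) (hs : 0 < s) (hst : s ≤ t) :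
    g3Fun μ₁ μ₂ ρ t s
      = 4*(μ₂ + (1 - 2*ρ)*μ₁) + Faux μ₁ μ₂ ρ t s / (s*(t - ρ^2*s)) := by
  have ht : 0 < t := lt_of_lt_of_le hs hst
  have h2 : 0 < t - ρ^2*s := by nlinarith
  have h1 : s ≠ 0 := hs.ne'
  have h2' : t - ρ^2*s ≠ 0 := h2.ne'
  rw [g3Fun, quadF_eq _ _ _ _ _ hρ hs hst, Faux, Baux]
  rw [add_div' _ _ _ (mul_ne_zero h1 h2')]
  congr 1
  ring

lemma Qaux_pos (μ₁ μ₂ ρ s : ℝ) (hμ1 : 0 < μ₁) (hμ12 : μ₁ ≤ μ₂)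
    (hρl : -1 < ρ) (hρu : ρ < 0) (hB : Baux μ₁ μ₂ ρ s < 0) :
    0 < Qaux μ₁ μ₂ ρ s := by
  have hμ2 : 0 < μ₂ := lt_of_lt_of_le hμ1 hμ12
  have hD : 0 < μ₂ - 2*ρ*μ₁ := by nlinarith
  have h6 : 0 < μ₂ - 6*ρ*μ₁ := by nlinarith
  have hW : 0 < μ₂*(μ₂ - 6*ρ*μ₁)*(μ₂ - 2*ρ*μ₁)^2 := by positivity
  have hX : 0 < 2*(1 - 2*ρ)*μ₂ - (1 + ρ)^2*μ₁ := by nlinarith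
  have hpos2 : 0 < μ₁*(μ₂ - 2*ρ*μ₁)^4*(2*(1 - 2*ρ)*μ₂ - (1 + ρ)^2*μ₁) := by positivity
  have hI3 : 2*(μ₂*(μ₂ - 6*ρ*μ₁)*(μ₂ - 2*ρ*μ₁)^2)*(Qaux μ₁ μ₂ ρ s)
      = (μ₂*(μ₂ - 6*ρ*μ₁)*(μ₂ - 2*ρ*μ₁)^2*s
          + ((2*μ₂^3 + 4*μ₁*μ₂^2 - 16*ρ*μ₁*μ₂^2 - 16*ρ*μ₁^2*μ₂ + 40*ρ^2*μ₁^2*μ₂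
              + 16*ρ^2*μ₁^3 - 32*ρ^3*μ₁^3)
             + 3*(μ₂ - 2*ρ*μ₁)^2*(3*ρ*μ₁ - μ₁ - μ₂)))^2
        + μ₁*(μ₂ - 2*ρ*μ₁)^4*(2*(1 - 2*ρ)*μ₂ - (1 + ρ)^2*μ₁)
        - 3*(μ₂*(μ₂ - 6*ρ*μ₁)*(μ₂ - 2*ρ*μ₁)^2)*(μ₂ - 2*ρ*μ₁)^2*(Baux μ₁ μ₂ ρ s) := by
    rw [Qaux, Baux]; ring
  nlinarith [sq_nonneg (μ₂*(μ₂ - 6*ρ*μ₁)*(μ₂ - 2*ρ*μ₁)^2*s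
          + ((2*μ₂^3 + 4*μ₁*μ₂^2 - 16*ρ*μ₁*μ₂^2 - 16*ρ*μ₁^2*μ₂ + 40*ρ^2*μ₁^2*μ₂
              + 16*ρ^2*μ₁^3 - 32*ρ^3*μ₁^3)
             + 3*(μ₂ - 2*ρ*μ₁)^2*(3*ρ*μ₁ - μ₁ - μ₂))),
      mul_pos (mul_pos hW (by positivity : (0:ℝ) < (μ₂ - 2*ρ*μ₁)^2)) (neg_pos.2 hB)]

lemma Faux_I2 (μ₁ μ₂ ρ t s : ℝ) :
    4*μ₁^2*s*(μ₂ - 2*ρ*μ₁)^2*(Faux μ₁ μ₂ ρ t s)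
      = (μ₂ - 2*ρ*μ₁)^2*(2*μ₁^2*s*t + Baux μ₁ μ₂ ρ s)^2
        + ((μ₂ - 2*ρ*μ₁)*s - 1)^2*(Qaux μ₁ μ₂ ρ s) := by
  rw [Faux, Baux, Qaux]; ring

lemma Faux_nonneg (μ₁ μ₂ ρ t s : ℝ) (hμ1 : 0 < μ₁) (hμ12 : μ₁ ≤ μ₂)
    (hρl : -1 < ρ) (hρu : ρ < 0) (hs : 0 < s) (hst : s ≤ t) :
    0 ≤ Faux μ₁ μ₂ ρ t s := by
  have hμ2 : 0 < μ₂ := lt_of_lt_of_le hμ1 hμ12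
  have hD : 0 < μ₂ - 2*ρ*μ₁ := by nlinarith
  have ht : 0 < t := lt_of_lt_of_le hs hst
  rcases le_or_gt 0 (Baux μ₁ μ₂ ρ s) with hB | hB
  · have hE1 : 0 < 1 - 2*ρ*(μ₂ - 2*ρ*μ₁)*s := by
      nlinarith [mul_pos (mul_pos (show (0:ℝ) < -(2*ρ) by linarith) hD) hs]
    have hC : 0 < (1 - 2*ρ)*s*(1 - 2*ρ*(μ₂ - 2*ρ*μ₁)*s) :=
      mul_pos (mul_pos (show (0:ℝ) < 1 - 2*ρ by linarith) hs) hE1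
    have h1 : 0 ≤ (Baux μ₁ μ₂ ρ s)*t := mul_nonneg hB ht.le
    rw [Faux]; nlinarith [mul_pos (mul_pos (mul_pos hμ1 hμ1) hs) (mul_pos ht ht)]
  · have hQ := Qaux_pos μ₁ μ₂ ρ s hμ1 hμ12 hρl hρu hB
    have hI2 := Faux_I2 μ₁ μ₂ ρ t s
    have h4 : 0 < 4*μ₁^2*s*(μ₂ - 2*ρ*μ₁)^2 := by positivity
    nlinarith [sq_nonneg (2*μ₁^2*s*t + Baux μ₁ μ₂ ρ s), sq_nonneg ((μ₂ - 2*ρ*μ₁)*s - 1),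
      mul_nonneg (sq_nonneg ((μ₂ - 2*ρ*μ₁)*s - 1)) hQ.le,
      mul_nonneg (sq_nonneg (2*μ₁^2*s*t + Baux μ₁ μ₂ ρ s)) (sq_nonneg (μ₂ - 2*ρ*μ₁))]

lemma Faux_eq_zero (μ₁ μ₂ ρ t s : ℝ) (hμ1 : 0 < μ₁) (hμ12 : μ₁ ≤ μ₂)
    (hρl : -1 < ρ) (hρu : ρ < 0) (hs : 0 < s) (hst : s ≤ t)
    (hF : Faux μ₁ μ₂ ρ t s = 0) :
    t = (1 - 2*ρ)/μ₁ ∧ s = 1/(μ₂ - 2*ρ*μ₁) := by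
  have hμ2 : 0 < μ₂ := lt_of_lt_of_le hμ1 hμ12
  have hD : 0 < μ₂ - 2*ρ*μ₁ := by nlinarith
  have ht : 0 < t := lt_of_lt_of_le hs hst
  have hE1 : 0 < 1 - 2*ρ*(μ₂ - 2*ρ*μ₁)*s := by
    nlinarith [mul_pos (mul_pos (show (0:ℝ) < -(2*ρ) by linarith) hD) hs]
  have hC : 0 < (1 - 2*ρ)*s*(1 - 2*ρ*(μ₂ - 2*ρ*μ₁)*s) :=
    mul_pos (mul_pos (show (0:ℝ) < 1 - 2*ρ by linarith) hs) hE1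
  have hBt : (Baux μ₁ μ₂ ρ s)*t < 0 := by
    have h0 : 0 < μ₁^2*s*t^2 := by positivity
    rw [Faux] at hF; nlinarith
  have hB : Baux μ₁ μ₂ ρ s < 0 := by
    by_contra h
    push_neg at h
    exact absurd (mul_nonneg h ht.le) (not_le.2 hBt)
  have hQ := Qaux_pos μ₁ μ₂ ρ s hμ1 hμ12 hρl hρu hB
  have hI2 := Faux_I2 μ₁ μ₂ ρ t s
  rw [hF, mul_zero] at hI2
  have h1 : (μ₂ - 2*ρ*μ₁)^2*(2*μ₁^2*s*t + Baux μ₁ μ₂ ρ s)^2 = 0 ∧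
      ((μ₂ - 2*ρ*μ₁)*s - 1)^2*(Qaux μ₁ μ₂ ρ s) = 0 := by
    constructor <;>
      nlinarith [sq_nonneg (2*μ₁^2*s*t + Baux μ₁ μ₂ ρ s), sq_nonneg ((μ₂ - 2*ρ*μ₁)*s - 1),
        mul_nonneg (sq_nonneg ((μ₂ - 2*ρ*μ₁)*s - 1)) hQ.le,
        mul_nonneg (sq_nonneg (2*μ₁^2*s*t + Baux μ₁ μ₂ ρ s)) (sq_nonneg (μ₂ - 2*ρ*μ₁))]
  have hs1 : (μ₂ - 2*ρ*μ₁)*s - 1 = 0 := by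
    have := h1.2
    have h2 : ((μ₂ - 2*ρ*μ₁)*s - 1)^2 = 0 := by
      rcases mul_eq_zero.1 this with h | h
      · exact h
      · exact absurd h hQ.ne'
    exact pow_eq_zero_iff (n := 2) (by norm_num) |>.1 h2
  have hseq : s = 1/(μ₂ - 2*ρ*μ₁) := by
    field_simp
    linarith
  have hlin : 2*μ₁^2*s*t + Baux μ₁ μ₂ ρ s = 0 := by
    have := h1.1
    have h2 : (2*μ₁^2*s*t + Baux μ₁ μ₂ ρ s)^2 = 0 := by
      rcases mul_eq_zero.1 this with h | h
      · exact absurd h (by positivity)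
      · exact h
    exact pow_eq_zero_iff (n := 2) (by norm_num) |>.1 h2
  refine ⟨?_, hseq⟩
  rw [Baux] at hlin
  have key : 2*μ₁*(t*μ₁ - (1 - 2*ρ)) = 0 := by
    linear_combination (μ₂ - 2*ρ*μ₁)*hlin
      - (2*μ₁^2*t + (6*ρ*μ₁ - 2*μ₁ - 2*μ₂) + μ₂ + μ₂*(μ₂ - 2*ρ*μ₁)*s)*hs1
  have h2μ : (2*μ₁ : ℝ) ≠ 0 := by positivity
  have hkey : t*μ₁ - (1 - 2*ρ) = 0 := by
    rcases mul_eq_zero.1 key with h | h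
    · exact absurd h h2μ
    · exact h
  rw [eq_div_iff hμ1.ne']
  linarith

theorem stmt10 (μ₁ μ₂ ρ : ℝ) (hμ1 : 0 < μ₁) (hμ12 : μ₁ ≤ μ₂)
    (hρl : -1 < ρ) (hρu : ρ < 0) :
    IsLeast { v : ℝ | ∃ t s : ℝ, 0 < s ∧ s ≤ t ∧ v = g3Fun μ₁ μ₂ ρ t s }
      (4 * (μ₂ + (1 - 2 * ρ) * μ₁)) ∧
    (g3Fun μ₁ μ₂ ρ ((1 - 2 * ρ) / μ₁) (1 / (μ₂ - 2 * ρ * μ₁))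
        = 4 * (μ₂ + (1 - 2 * ρ) * μ₁)) ∧
    (∀ t s : ℝ, 0 < s → s ≤ t →
      g3Fun μ₁ μ₂ ρ t s = 4 * (μ₂ + (1 - 2 * ρ) * μ₁) →
      t = (1 - 2 * ρ) / μ₁ ∧ s = 1 / (μ₂ - 2 * ρ * μ₁)) := by
  have hμ2 : 0 < μ₂ := lt_of_lt_of_le hμ1 hμ12
  have hρ2 : ρ^2 < 1 := by nlinarith
  have hD : 0 < μ₂ - 2*ρ*μ₁ := by nlinarith
  -- the candidate point
  have hsstar : 0 < 1/(μ₂ - 2*ρ*μ₁) := by positivity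
  have htstar : (1/(μ₂ - 2*ρ*μ₁) : ℝ) ≤ (1 - 2*ρ)/μ₁ := by
    rw [div_le_div_iff₀ hD hμ1]
    nlinarith
  have hFstar : Faux μ₁ μ₂ ρ ((1 - 2*ρ)/μ₁) (1/(μ₂ - 2*ρ*μ₁)) = 0 := by
    rw [Faux, Baux]
    have := hD.ne'
    have := hμ1.ne'
    obtain ⟨D, hDd⟩ : ∃ D, D = μ₂ - 2*ρ*μ₁ := ⟨_, rfl⟩
    rw [← hDd]
    have hm : μ₂ = D + 2*ρ*μ₁ := by linarith
    subst hm
    have hD0 : D ≠ 0 := by rw [hDd]; ring_nf; linarith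
    field_simp
    ring
  have hval : g3Fun μ₁ μ₂ ρ ((1 - 2*ρ)/μ₁) (1/(μ₂ - 2*ρ*μ₁))
      = 4*(μ₂ + (1 - 2*ρ)*μ₁) := by
    rw [g3_eq μ₁ μ₂ ρ _ _ hρ2 hsstar htstar, hFstar, zero_div, add_zero]
  refine ⟨⟨⟨(1 - 2*ρ)/μ₁, 1/(μ₂ - 2*ρ*μ₁), hsstar, htstar, hval.symm⟩, ?_⟩, hval, ?_⟩
  · rintro v ⟨t, s, hs, hst, rfl⟩
    have ht : 0 < t := lt_of_lt_of_le hs hst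
    have h2 : 0 < t - ρ^2*s := by nlinarith
    have hF := Faux_nonneg μ₁ μ₂ ρ t s hμ1 hμ12 hρl hρu hs hst
    rw [g3_eq μ₁ μ₂ ρ t s hρ2 hs hst]
    have : 0 ≤ Faux μ₁ μ₂ ρ t s / (s*(t - ρ^2*s)) := by positivity
    linarith
  · intro t s hs hst hg
    have ht : 0 < t := lt_of_lt_of_le hs hst
    have h2 : 0 < t - ρ^2*s := by nlinarith
    rw [g3_eq μ₁ μ₂ ρ t s hρ2 hs hst] at hg
    have hF0 : Faux μ₁ μ₂ ρ t s = 0 := by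
      have hd : s*(t - ρ^2*s) ≠ 0 := by positivity
      have : Faux μ₁ μ₂ ρ t s / (s*(t - ρ^2*s)) = 0 := by linarith
      exact (div_eq_zero_iff.1 this).resolve_right hd
    exact Faux_eq_zero μ₁ μ₂ ρ t s hμ1 hμ12 hρl hρu hs hst hF0
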